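/- Let p > 2, a ∈ (0, 1/2), and let v ∈ C²((0,a)) satisfy -v''(x) ≤ (v'(x))^p wherever v'(x) > 0, and suppose lim_{y→0⁺} v'(y) = +∞. Then v'(x) ≥ U*'(x) = ((p-1)x)^{-1/(p-1)} for all x ∈ (0,a). -/

import Mathlib

open Set Filter Real

/-- Key lemma: if `v' > 0` on `(0,b)` and the differential inequality holds, then
`(v' s)^(1-p) ≤ (p-1) s` on `(0,b)`. -/
theorem aux_key (p a : ℝ) (hp : 2 < p)
    (v' v'' : ℝ → ℝ)
    (hv' : ∀ x ∈ Set.Ioo (0:ℝ) a, HasDerivAt v' (v'' x) x)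
    (hineq : ∀ x ∈ Set.Ioo (0:ℝ) a, 0 < v' x → -v'' x ≤ (v' x) ^ p)
    (hblow : Filter.Tendsto v' (nhdsWithin 0 (Set.Ioi 0)) Filter.atTop)
    (b : ℝ) (hb : b ≤ a) (hpos : ∀ t ∈ Set.Ioo (0:ℝ) b, 0 < v' t) :
    ∀ s ∈ Set.Ioo (0:ℝ) b, (v' s) ^ (1 - p) ≤ (p - 1) * s := by
  have hp0 : (0:ℝ) < p - 1 := by linarith
  intro s hs
  set g : ℝ → ℝ := fun t => (p - 1) * t - (v' t) ^ (1 - p) with hg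
  -- derivative of g is nonneg on (0,b)
  have hgd : ∀ t ∈ Set.Ioo (0:ℝ) b, ∃ d, HasDerivAt g d t ∧ 0 ≤ d := by
    intro t ht
    have htA : t ∈ Set.Ioo (0:ℝ) a := ⟨ht.1, lt_of_lt_of_le ht.2 hb⟩
    have hu : 0 < v' t := hpos t ht
    have hw : HasDerivAt (fun y => (v' y) ^ (1 - p))
        (v'' t * (1 - p) * (v' t) ^ (1 - p - 1)) t :=
      (hv' t htA).rpow_const (Or.inl (ne_of_gt hu))
    refine ⟨(p - 1) * 1 - v'' t * (1 - p) * (v' t) ^ (1 - p - 1), ?_, ?_⟩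
    · exact ((hasDerivAt_id t).const_mul (p - 1)).sub hw
    · have h1 : -v'' t ≤ (v' t) ^ p := hineq t htA hu
      have h2 : v'' t * (1 - p) ≤ (p - 1) * (v' t) ^ p := by nlinarith
      have h3 : (0:ℝ) < (v' t) ^ (1 - p - 1) := Real.rpow_pos_of_pos hu _
      have h4 : v'' t * (1 - p) * (v' t) ^ (1 - p - 1)
          ≤ (p - 1) * (v' t) ^ p * (v' t) ^ (1 - p - 1) :=
        mul_le_mul_of_nonneg_right h2 h3.le
      have h5 : (v' t) ^ p * (v' t) ^ (1 - p - 1) = 1 := by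
        rw [← Real.rpow_add hu]
        norm_num
      nlinarith
  -- g is monotone on any [y,s] ⊆ (0,b), hence g y ≤ g s for y ∈ (0,s)
  have hmono : ∀ y ∈ Set.Ioo (0:ℝ) s, g y ≤ g s := by
    intro y hy
    have hsub : Set.Icc y s ⊆ Set.Ioo (0:ℝ) b := fun t ht =>
      ⟨lt_of_lt_of_le hy.1 ht.1, lt_of_le_of_lt ht.2 hs.2⟩
    have hdiff : ∀ t ∈ Set.Icc y s, HasDerivAt g (deriv g t) t := by
      intro t ht
      obtain ⟨d, hd, _⟩ := hgd t (hsub ht)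
      rwa [hd.deriv]
    have := monotoneOn_of_deriv_nonneg (convex_Icc y s)
      (fun t ht => (hdiff t ht).continuousAt.continuousWithinAt)
      (fun t ht => (hdiff t (interior_subset ht)).differentiableAt.differentiableWithinAt)
      (fun t ht => by
        obtain ⟨d, hd, hd0⟩ := hgd t (hsub (interior_subset ht))
        rwa [hd.deriv])
    exact this (Set.left_mem_Icc.2 hy.2.le) (Set.right_mem_Icc.2 hy.2.le) hy.2.le
  -- limit as y → 0⁺ : g y → 0
  have hlim : Filter.Tendsto g (nhdsWithin 0 (Set.Ioi 0)) (nhds 0) := by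
    have h1 : Filter.Tendsto (fun y : ℝ => (p - 1) * y) (nhdsWithin 0 (Set.Ioi 0))
        (nhds 0) := by
      have h := ((continuous_const.mul continuous_id :
        Continuous fun y : ℝ => (p - 1) * y)).tendsto (0:ℝ)
      have h' : Filter.Tendsto (fun y : ℝ => (p - 1) * y) (nhdsWithin 0 (Set.Ioi 0))
          (nhds ((p - 1) * 0)) := h.mono_left nhdsWithin_le_nhds
      simpa using h'
    have h2 : Filter.Tendsto (fun y => (v' y) ^ (1 - p)) (nhdsWithin 0 (Set.Ioi 0))
        (nhds 0) := by
      have : Filter.Tendsto (fun x : ℝ => x ^ (-(p-1))) Filter.atTop (nhds 0) :=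
        tendsto_rpow_neg_atTop hp0
      have := this.comp hblow
      simpa [Function.comp_def, show -(p-1) = 1 - p by ring] using this
    simpa using h1.sub h2
  have hev : ∀ᶠ y in nhdsWithin 0 (Set.Ioi 0), g y ≤ g s := by
    filter_upwards [Ioo_mem_nhdsGT_of_mem ⟨le_refl (0:ℝ), hs.1⟩] with y hy
    exact hmono y hy
  have h0 : (0:ℝ) ≤ g s := le_of_tendsto hlim hev
  simpa [hg, sub_nonneg] using h0

/-- If `v` is `C²` on `(0,a)` with `-v'' ≤ (v')^p` wherever `v' > 0`, and
`v'(y) → +∞` as `y → 0⁺`, then `v' ≥ U*' = ((p-1)x)^{-1/(p-1)}` on `(0,a)`. -/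
theorem deriv_ge_singular_profile (p a : ℝ) (hp : 2 < p) (ha : a ∈ Set.Ioo (0:ℝ) (1/2))
    (v v' v'' : ℝ → ℝ)
    (hv : ∀ x ∈ Set.Ioo (0:ℝ) a, HasDerivAt v (v' x) x)
    (hv' : ∀ x ∈ Set.Ioo (0:ℝ) a, HasDerivAt v' (v'' x) x)
    (hineq : ∀ x ∈ Set.Ioo (0:ℝ) a, 0 < v' x → -v'' x ≤ (v' x) ^ p)
    (hblow : Filter.Tendsto v' (nhdsWithin 0 (Set.Ioi 0)) Filter.atTop) :
    ∀ x ∈ Set.Ioo (0:ℝ) a, ((p - 1) * x) ^ (-(1 / (p - 1))) ≤ v' x := by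
  have hp0 : (0:ℝ) < p - 1 := by linarith
  -- conversion lemma
  have conv : ∀ s : ℝ, 0 < s → 0 < v' s → (v' s) ^ (1 - p) ≤ (p - 1) * s →
      ((p - 1) * s) ^ (-(1 / (p - 1))) ≤ v' s := by
    intro s hs hu h
    have hx : (0:ℝ) < (v' s) ^ (1 - p) := Real.rpow_pos_of_pos hu _
    have hz : (-(1 / (p - 1))) ≤ (0:ℝ) := neg_nonpos.mpr (div_nonneg zero_le_one hp0.le)
    have := Real.rpow_le_rpow_of_nonpos hx h hz
    calc ((p - 1) * s) ^ (-(1 / (p - 1)))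
        ≤ ((v' s) ^ (1 - p)) ^ (-(1 / (p - 1))) := this
      _ = v' s := by
          rw [← Real.rpow_mul hu.le]
          rw [show (1 - p) * (-(1 / (p - 1))) = 1 by field_simp; ring]
          exact Real.rpow_one _
  -- positivity of v' on (0,a)
  have hpos : ∀ x ∈ Set.Ioo (0:ℝ) a, 0 < v' x := by
    by_contra hc
    push_neg at hc
    obtain ⟨z₀, hz₀, hz₀'⟩ := hc
    -- δ with v' ≥ 1 on (0,δ)
    obtain ⟨δ, hδ0, hδ⟩ : ∃ δ, 0 < δ ∧ ∀ t ∈ Set.Ioo (0:ℝ) δ, 1 ≤ v' t := by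
      have := hblow.eventually (Filter.eventually_ge_atTop (1:ℝ))
      rw [Filter.eventually_iff, mem_nhdsGT_iff_exists_Ioo_subset] at this
      obtain ⟨u, hu, hsub⟩ := this
      exact ⟨u, hu, fun t ht => hsub ht⟩
    set S : Set ℝ := {t | t ∈ Set.Ioo (0:ℝ) a ∧ v' t ≤ 0} with hS
    have hSne : S.Nonempty := ⟨z₀, hz₀, hz₀'⟩
    have hSbd : BddBelow S := ⟨0, fun t ht => ht.1.1.le⟩
    set z := sInf S with hz
    have hzδ : δ ≤ z := by
      apply le_csInf hSne
      intro t ht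
      by_contra hlt
      push_neg at hlt
      have := hδ t ⟨ht.1.1, hlt⟩
      linarith [ht.2]
    have hzz₀ : z ≤ z₀ := csInf_le hSbd ⟨hz₀, hz₀'⟩
    have hzA : z ∈ Set.Ioo (0:ℝ) a := ⟨lt_of_lt_of_le hδ0 hzδ, lt_of_le_of_lt hzz₀ hz₀.2⟩
    -- v' z ≤ 0
    have hvz : v' z ≤ 0 := by
      by_contra hvzp
      push_neg at hvzp
      have hcont : ContinuousAt v' z := (hv' z hzA).continuousAt
      have hev : ∀ᶠ t in nhds z, 0 < v' t := hcont.eventually (eventually_gt_nhds hvzp)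
      rw [Metric.eventually_nhds_iff] at hev
      obtain ⟨ε, hε0, hε⟩ := hev
      obtain ⟨t, htS, htlt⟩ := exists_lt_of_csInf_lt hSne (show sInf S < z + ε by linarith)
      have hzt : z ≤ t := csInf_le hSbd htS
      have : 0 < v' t := hε (by rw [Real.dist_eq]; rw [abs_lt]; constructor <;> linarith)
      linarith [htS.2]
    -- v' > 0 on (0, z)
    have hposz : ∀ t ∈ Set.Ioo (0:ℝ) z, 0 < v' t := by
      intro t ht
      by_contra htn
      push_neg at htn
      have : z ≤ t := csInf_le hSbd ⟨⟨ht.1, lt_trans ht.2 hzA.2⟩, htn⟩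
      linarith [ht.2]
    have hkey := aux_key p a hp v' v'' hv' hineq hblow z hzA.2.le hposz
    -- lower bound on (0,z), then limit t → z⁻
    have hlow : ∀ t ∈ Set.Ioo (0:ℝ) z, ((p - 1) * t) ^ (-(1 / (p - 1))) ≤ v' t :=
      fun t ht => conv t ht.1 (hposz t ht) (hkey t ht)
    have hcv : Filter.Tendsto v' (nhdsWithin z (Set.Iio z)) (nhds (v' z)) :=
      ((hv' z hzA).continuousAt.tendsto).mono_left nhdsWithin_le_nhds
    have hcr : Filter.Tendsto (fun t => ((p - 1) * t) ^ (-(1 / (p - 1))))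
        (nhdsWithin z (Set.Iio z)) (nhds (((p - 1) * z) ^ (-(1 / (p - 1))))) := by
      apply Filter.Tendsto.mono_left _ nhdsWithin_le_nhds
      exact (((continuous_const.mul continuous_id).continuousAt).rpow_const
        (Or.inl (ne_of_gt (mul_pos hp0 hzA.1)))).tendsto
    have hev : ∀ᶠ t in nhdsWithin z (Set.Iio z),
        ((p - 1) * t) ^ (-(1 / (p - 1))) ≤ v' t := by
      filter_upwards [Ioo_mem_nhdsLT_of_mem ⟨hzA.1, le_refl z⟩] with t ht
      exact hlow t ht
    have hlim := le_of_tendsto_of_tendsto hcr hcv hev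
    have : (0:ℝ) < ((p - 1) * z) ^ (-(1 / (p - 1))) :=
      Real.rpow_pos_of_pos (mul_pos hp0 hzA.1) _
    linarith
  intro x hx
  exact conv x hx.1 (hpos x hx) (aux_key p a hp v' v'' hv' hineq hblow a le_rfl hpos x hx)
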